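/- Suppose μ·p·S₀^{1−q} < (1−q)·β·I₀^p. Then I(t) → 0 as t → ∞, and there exists a finite time T* ∈ (0,∞) such that S(t) = 0 for all t ≥ T*. -/

import Mathlib

open Filter Topology

/-- Proposition 8.1(i) of the paper, strict inequality case: for the SI ODE system
`S' = −β S^q I^p`, `I' = β S^q I^p − μ I` with `β, μ, p > 0`, `q ∈ (0,1)`,
`S(0) = S₀ > 0`, `I(0) = I₀ > 0`, if `μ·p·S₀^{1−q} < (1−q)·β·I₀^p`, then
`I(t) → 0` as `t → ∞` and there is a finite time `T* ∈ (0,∞)` with `S(t) = 0` for all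
`t ≥ T*`. -/
theorem stmt6 (β μ p q S₀ I₀ : ℝ) (S I : ℝ → ℝ)
    (hβ : 0 < β) (hμ : 0 < μ) (hp : 0 < p) (hq0 : 0 < q) (hq1 : q < 1)
    (hS₀ : 0 < S₀) (hI₀ : 0 < I₀) (hS0 : S 0 = S₀) (hI0 : I 0 = I₀)
    (hScont : ContinuousOn S (Set.Ici 0)) (hIcont : ContinuousOn I (Set.Ici 0))
    (hSnonneg : ∀ t : ℝ, 0 ≤ t → 0 ≤ S t) (hIpos : ∀ t : ℝ, 0 ≤ t → 0 < I t)
    (hSode : ∀ t : ℝ, 0 < t → HasDerivAt S (-(β * S t ^ q * I t ^ p)) t)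
    (hIode : ∀ t : ℝ, 0 < t → HasDerivAt I (β * S t ^ q * I t ^ p - μ * I t) t)
    (hlt : μ * p * S₀ ^ (1 - q) < (1 - q) * β * I₀ ^ p) :
    Tendsto I atTop (𝓝 0) ∧ ∃ Tstar : ℝ, 0 < Tstar ∧ ∀ t : ℝ, Tstar ≤ t → S t = 0 := by
  have hq1' : (0:ℝ) < 1 - q := by linarith
  set ε : ℝ := (1 - q) * β * I₀ ^ p - μ * p * S₀ ^ (1 - q) with hεdef
  have hε : 0 < ε := by simp only [hεdef]; linarith
  -- S is antitone on [0, ∞)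
  have hSanti : AntitoneOn S (Set.Ici 0) := by
    apply antitoneOn_of_deriv_nonpos (convex_Ici 0) hScont
    · intro t ht
      rw [interior_Ici] at ht
      exact (hSode t ht).differentiableAt.differentiableWithinAt
    · intro t ht
      rw [interior_Ici] at ht
      rw [(hSode t ht).deriv]
      have h1 := Real.rpow_nonneg (hSnonneg t ht.le) q
      have h2 := (Real.rpow_pos_of_pos (hIpos t ht.le) p)
      have h3 : 0 ≤ β * S t ^ q * I t ^ p := mul_nonneg (mul_nonneg hβ.le h1) h2.le
      linarith
  -- Key estimate: while S stays positive, S^{1-q} decreases at rate at least ε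
  have keyB : ∀ T : ℝ, 0 ≤ T → (∀ t ∈ Set.Icc (0:ℝ) T, 0 < S t) →
      S T ^ (1 - q) + ε * T ≤ S₀ ^ (1 - q) := by
    intro T hT hpos
    set F : ℝ → ℝ := fun t => (1 - q) * β * I t ^ p - μ * p * S t ^ (1 - q) with hF
    have hsub : Set.Icc (0:ℝ) T ⊆ Set.Ici 0 := fun x hx => hx.1
    have hScontT : ContinuousOn (fun t => S t ^ (1 - q)) (Set.Icc 0 T) :=
      (hScont.mono hsub).rpow_const (fun x _ => Or.inr hq1'.le)
    have hIcontT : ContinuousOn (fun t => I t ^ p) (Set.Icc 0 T) :=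
      (hIcont.mono hsub).rpow_const (fun x _ => Or.inr hp.le)
    have hFcont : ContinuousOn F (Set.Icc 0 T) :=
      (continuousOn_const.mul hIcontT).sub (continuousOn_const.mul hScontT)
    -- derivatives on the interior
    have hderivs : ∀ t ∈ Set.Ioo (0:ℝ) T,
        HasDerivAt (fun u => S u ^ (1 - q))
          (-(β * S t ^ q * I t ^ p) * (1 - q) * S t ^ (1 - q - 1)) t ∧
        HasDerivAt (fun u => I u ^ p)
          ((β * S t ^ q * I t ^ p - μ * I t) * p * I t ^ (p - 1)) t := by
      intro t ht
      have hSt : 0 < S t := hpos t ⟨ht.1.le, ht.2.le⟩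
      have hIt : 0 < I t := hIpos t ht.1.le
      exact ⟨(hSode t ht.1).rpow_const (Or.inl hSt.ne'),
        (hIode t ht.1).rpow_const (Or.inl hIt.ne')⟩
    have hFderiv : ∀ t ∈ Set.Ioo (0:ℝ) T, HasDerivAt F
        ((1 - q) * β * ((β * S t ^ q * I t ^ p - μ * I t) * p * I t ^ (p - 1)) -
          μ * p * (-(β * S t ^ q * I t ^ p) * (1 - q) * S t ^ (1 - q - 1))) t := by
      intro t ht
      exact ((hderivs t ht).2.const_mul ((1 - q) * β)).sub
        ((hderivs t ht).1.const_mul (μ * p))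
    have hpow1 : ∀ t ∈ Set.Ioo (0:ℝ) T, I t ^ (p - 1) * I t = I t ^ p := by
      intro t ht
      have hIt : 0 < I t := hIpos t ht.1.le
      rw [← Real.rpow_add_one hIt.ne' (p - 1), sub_add_cancel]
    have hpow2 : ∀ t ∈ Set.Ioo (0:ℝ) T, S t ^ q * S t ^ (1 - q - 1) = 1 := by
      intro t ht
      have hSt : 0 < S t := hpos t ⟨ht.1.le, ht.2.le⟩
      rw [← Real.rpow_add hSt]
      have : q + (1 - q - 1) = 0 := by ring
      rw [this, Real.rpow_zero]
    have hFmono : MonotoneOn F (Set.Icc 0 T) := by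
      apply monotoneOn_of_deriv_nonneg (convex_Icc 0 T) hFcont
      · intro t ht
        rw [interior_Icc] at ht
        exact (hFderiv t ht).differentiableAt.differentiableWithinAt
      · intro t ht
        rw [interior_Icc] at ht
        rw [(hFderiv t ht).deriv]
        have h1 := hpow1 t ht
        have h2 := hpow2 t ht
        have hSt : (0:ℝ) ≤ S t ^ q := Real.rpow_nonneg (hSnonneg t ht.1.le) q
        have hIt : (0:ℝ) ≤ I t ^ p := (Real.rpow_pos_of_pos (hIpos t ht.1.le) p).le
        have hIt1 : (0:ℝ) ≤ I t ^ (p - 1) :=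
          (Real.rpow_pos_of_pos (hIpos t ht.1.le) (p - 1)).le
        have key : (1 - q) * β * ((β * S t ^ q * I t ^ p - μ * I t) * p * I t ^ (p - 1)) -
            μ * p * (-(β * S t ^ q * I t ^ p) * (1 - q) * S t ^ (1 - q - 1)) =
            (1 - q) * p * β ^ 2 * (S t ^ q) * (I t ^ p) * (I t ^ (p - 1)) := by
          linear_combination (-(1 - q) * β * p * μ) * h1 + (μ * p * (1 - q) * β * I t ^ p) * h2
        rw [key]
        positivity
    have hFlb : ∀ t ∈ Set.Icc (0:ℝ) T, ε ≤ (1 - q) * β * I t ^ p := by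
      intro t ht
      have h0 : (0:ℝ) ∈ Set.Icc (0:ℝ) T := ⟨le_refl 0, hT⟩
      have := hFmono h0 ht ht.1
      have hF0 : F 0 = ε := by simp only [hF, hS0, hI0, hεdef]
      have hSt : (0:ℝ) ≤ S t ^ (1 - q) := Real.rpow_nonneg (hSnonneg t ht.1) (1 - q)
      rw [hF0] at this
      simp only [hF] at this
      have h4 : 0 ≤ μ * p * S t ^ (1 - q) := mul_nonneg (mul_nonneg hμ.le hp.le) hSt
      linarith
    -- Now the comparison function G
    set G : ℝ → ℝ := fun t => S t ^ (1 - q) + ε * t with hG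
    have hGanti : AntitoneOn G (Set.Icc 0 T) := by
      apply antitoneOn_of_deriv_nonpos (convex_Icc 0 T)
        (hScontT.add (continuousOn_const.mul continuousOn_id))
      · intro t ht
        rw [interior_Icc] at ht
        exact ((hderivs t ht).1.add ((hasDerivAt_id t).const_mul ε)).differentiableAt.differentiableWithinAt
      · intro t ht
        rw [interior_Icc] at ht
        rw [show deriv ((fun t => S t ^ (1 - q)) + (fun x => (1 - q) * β * I₀ ^ p - μ * p * S₀ ^ (1 - q)) * id) t = _ from ((hderivs t ht).1.add ((hasDerivAt_id t).const_mul ε)).deriv]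
        have h2 := hpow2 t ht
        have hbd := hFlb t ⟨ht.1.le, ht.2.le⟩
        nlinarith
    have h0 : (0:ℝ) ∈ Set.Icc (0:ℝ) T := ⟨le_refl 0, hT⟩
    have hTmem : T ∈ Set.Icc (0:ℝ) T := ⟨hT, le_refl T⟩
    have := hGanti h0 hTmem hT
    simp only [hG, hS0] at this
    linarith
  -- There is a time where S vanishes
  have hexzero : ∃ t₀ : ℝ, 0 < t₀ ∧ S t₀ = 0 := by
    set B : ℝ := (S₀ ^ (1 - q) + 1) / ε with hB
    have hS₀pow : (0:ℝ) < S₀ ^ (1 - q) := Real.rpow_pos_of_pos hS₀ (1 - q)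
    have hBpos : 0 < B := by positivity
    by_contra hcon
    push_neg at hcon
    have hpos : ∀ t ∈ Set.Icc (0:ℝ) B, 0 < S t := by
      intro t ht
      rcases eq_or_lt_of_le (hSnonneg t ht.1) with h | h
      · rcases eq_or_lt_of_le ht.1 with h0 | h0
        · rw [← h0, hS0]; exact hS₀
        · exact absurd h.symm (hcon t h0)
      · exact h
    have := keyB B hBpos.le hpos
    have hεB : ε * B = S₀ ^ (1 - q) + 1 := by
      rw [hB]; field_simp
    have hSB : (0:ℝ) ≤ S B ^ (1 - q) := Real.rpow_nonneg (hSnonneg B hBpos.le) (1 - q)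
    linarith
  obtain ⟨t₀, ht₀pos, ht₀zero⟩ := hexzero
  have hzero : ∀ t : ℝ, t₀ ≤ t → S t = 0 := by
    intro t ht
    have h1 : S t ≤ S t₀ := hSanti (le_of_lt ht₀pos) (ht₀pos.le.trans ht) ht
    have h2 : 0 ≤ S t := hSnonneg t (ht₀pos.le.trans ht)
    rw [ht₀zero] at h1
    linarith
  constructor
  · -- I(t) → 0
    have hkey : ∀ b : ℝ, t₀ ≤ b → I b * Real.exp (μ * b) = I t₀ * Real.exp (μ * t₀) := by
      intro b hb
      have hcont : ContinuousOn (fun t => I t * Real.exp (μ * t)) (Set.Icc t₀ b) := by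
        apply ContinuousOn.mul
        · exact hIcont.mono (fun x hx => le_trans ht₀pos.le hx.1)
        · exact (Real.continuous_exp.comp (continuous_const.mul continuous_id)).continuousOn
      have hderiv : ∀ x ∈ Set.Ico t₀ b,
          HasDerivAt (fun t => I t * Real.exp (μ * t)) 0 x := by
        intro x hx
        have hxpos : 0 < x := lt_of_lt_of_le ht₀pos hx.1
        have hexp : HasDerivAt (fun t => Real.exp (μ * t)) (Real.exp (μ * x) * (μ * 1)) x :=
          ((hasDerivAt_id x).const_mul μ).exp
        have hd := (hIode x hxpos).mul hexp
        refine hd.congr_deriv ?_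
        rw [hzero x hx.1, Real.zero_rpow hq0.ne']
        ring
      have := constant_of_has_deriv_right_zero hcont
        (fun x hx => (hderiv x hx).hasDerivWithinAt) b ⟨hb, le_refl b⟩
      exact this
    have hform : ∀ᶠ b in atTop, I b = (I t₀ * Real.exp (μ * t₀)) * Real.exp (-(μ * b)) := by
      filter_upwards [eventually_ge_atTop t₀] with b hb
      have h := hkey b hb
      have he : Real.exp (μ * b) ≠ 0 := (Real.exp_pos _).ne'
      rw [Real.exp_neg]
      field_simp
      linarith [h]
    have hlim : Tendsto (fun b => (I t₀ * Real.exp (μ * t₀)) * Real.exp (-(μ * b)))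
        atTop (𝓝 0) := by
      have h1 : Tendsto (fun b : ℝ => -(μ * b)) atTop atBot := by
        apply tendsto_neg_atBot_iff.mpr
        exact Tendsto.const_mul_atTop hμ tendsto_id
      have h2 := Real.tendsto_exp_atBot.comp h1
      have := h2.const_mul (I t₀ * Real.exp (μ * t₀))
      simpa using this
    exact hlim.congr' (by filter_upwards [hform] with b hb using hb.symm)
  · exact ⟨t₀, ht₀pos, hzero⟩
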